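/- arXiv:2110.13049 — 4 statements merged into one kernel-verified Lean document; each statement's English description precedes it below -/
import Mathlib

section
/- If a semimetric space X is sequentially f-compact (every sequence (x_i) with d(x_i,x_j) < ∞ for all i < j has a subsequence that converges with respect to the backward topology), then X is f-complete (every forward Cauchy sequence b-converges to a point of X). -/
open ENNReal

/-- A semimetric on `X`: like a metric but taking values in `[0,∞]` and not
necessarily symmetric. -/
structure Semimetric (X : Type*) where
  d : X → X → ℝ≥0∞
  refl : ∀ x, d x x = 0
  eq_of_d_eq_zero : ∀ x y, d x y = 0 → x = y
  triangle : ∀ x y z, d x y ≤ d x z + d z y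

/-- `(x i)` b-converges to `p`: convergence with respect to the backward topology,
i.e. `d (x i) p → 0`. -/
def BConv {X : Type*} (m : Semimetric X) (x : ℕ → X) (p : X) : Prop :=
  ∀ ε : ℝ≥0∞, 0 < ε → ∃ N : ℕ, ∀ i ≥ N, m.d (x i) p < ε

/-- `(x i)` is forward Cauchy. -/
def FCauchy {X : Type*} (m : Semimetric X) (x : ℕ → X) : Prop :=
  ∀ ε : ℝ≥0∞, 0 < ε → ∃ N : ℕ, ∀ n mm : ℕ, N ≤ n → n ≤ mm → m.d (x n) (x mm) < ε

/-- If a semimetric space is sequentially f-compact (every sequence with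
`d (x i) (x j) < ∞` for `i < j` has a b-convergent subsequence), then it is
f-complete (every forward Cauchy sequence b-converges). -/
theorem seq_f_compact_implies_f_complete {X : Type*} (m : Semimetric X)
    (hcomp : ∀ x : ℕ → X, (∀ i j : ℕ, i < j → m.d (x i) (x j) < ⊤) →
      ∃ (φ : ℕ → ℕ) (p : X), StrictMono φ ∧ BConv m (fun k => x (φ k)) p) :
    ∀ x : ℕ → X, FCauchy m x → ∃ p : X, BConv m x p := by
  intro x hx
  obtain ⟨N₀, hN₀⟩ := hx 1 (by norm_num)
  obtain ⟨φ, p, hφ, hconv⟩ := hcomp (fun k => x (k + N₀)) (by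
    intro i j hij
    exact lt_of_lt_of_le (hN₀ (i + N₀) (j + N₀) (Nat.le_add_left _ _)
      (by omega)) le_top)
  refine ⟨p, fun ε hε => ?_⟩
  have hε2 : 0 < ε / 2 := ENNReal.half_pos hε.ne'
  obtain ⟨N₁, hN₁⟩ := hx (ε / 2) hε2
  obtain ⟨K, hK⟩ := hconv (ε / 2) hε2
  refine ⟨N₁, fun i hi => ?_⟩
  set k := max K i with hk
  have h1 : m.d (x i) (x (φ k + N₀)) < ε / 2 :=
    hN₁ i (φ k + N₀) hi (le_trans (le_trans (le_max_right K i) (hφ.le_apply))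
      (Nat.le_add_right _ _))
  have h2 : m.d (x (φ k + N₀)) p < ε / 2 := hK k (le_max_left K i)
  calc m.d (x i) p ≤ m.d (x i) (x (φ k + N₀)) + m.d (x (φ k + N₀)) p :=
        m.triangle _ _ _
    _ < ε / 2 + ε / 2 := ENNReal.add_lt_add h1 h2
    _ = ε := ENNReal.add_halves ε
end

section
/- If a semimetric space X is sequentially b-compact (every sequence (x_i) with d(x_j,x_i) < ∞ for all i < j has a subsequence converging in the forward topology), then X is b-complete (every backward Cauchy sequence f-converges to a point of X). -/
open ENNReal

/-- `(x i)` f-converges to `p`: convergence with respect to the forward topology,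
i.e. `d p (x i) → 0`. -/
def FConv {X : Type*} (m : Semimetric X) (x : ℕ → X) (p : X) : Prop :=
  ∀ ε : ℝ≥0∞, 0 < ε → ∃ N : ℕ, ∀ i ≥ N, m.d p (x i) < ε

/-- `(x i)` is backward Cauchy: `d (x m) (x n) < ε` for all `m ≥ n ≥ N`. -/
def BCauchy {X : Type*} (m : Semimetric X) (x : ℕ → X) : Prop :=
  ∀ ε : ℝ≥0∞, 0 < ε → ∃ N : ℕ, ∀ n mm : ℕ, N ≤ n → n ≤ mm → m.d (x mm) (x n) < ε

/-- If a semimetric space is sequentially b-compact (every sequence with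
`d (x j) (x i) < ∞` for `i < j` has an f-convergent subsequence), then it is
b-complete (every backward Cauchy sequence f-converges). -/
theorem seq_b_compact_implies_b_complete {X : Type*} (m : Semimetric X)
    (hcomp : ∀ x : ℕ → X, (∀ i j : ℕ, i < j → m.d (x j) (x i) < ⊤) →
      ∃ (φ : ℕ → ℕ) (p : X), StrictMono φ ∧ FConv m (fun k => x (φ k)) p) :
    ∀ x : ℕ → X, BCauchy m x → ∃ p : X, FConv m x p := by
  intro x hx
  obtain ⟨N₀, hN₀⟩ := hx 1 (by norm_num)
  set y : ℕ → X := fun k => x (N₀ + k) with hy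
  have hfin : ∀ i j : ℕ, i < j → m.d (y j) (y i) < ⊤ := by
    intro i j hij
    exact lt_of_lt_of_le (hN₀ (N₀ + i) (N₀ + j) (Nat.le_add_right _ _)
      (by omega)) le_top
  obtain ⟨φ, p, hφ, hconv⟩ := hcomp y hfin
  refine ⟨p, ?_⟩
  intro ε hε
  have hε2 : (0 : ℝ≥0∞) < ε / 2 := ENNReal.half_pos hε.ne'
  obtain ⟨N₁, hN₁⟩ := hx (ε / 2) hε2
  obtain ⟨K, hK⟩ := hconv (ε / 2) hε2
  refine ⟨N₁, fun i hi => ?_⟩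
  -- choose k large so that N₀ + φ k ≥ i and k ≥ K
  obtain ⟨k, hk1, hk2⟩ : ∃ k, K ≤ k ∧ i ≤ N₀ + φ k := by
    refine ⟨max K i, le_max_left _ _, ?_⟩
    have : max K i ≤ φ (max K i) := hφ.le_apply
    omega
  calc m.d p (x i) ≤ m.d p (y (φ k)) + m.d (y (φ k)) (x i) :=
        m.triangle _ _ _
    _ < ε / 2 + ε / 2 := by
        refine ENNReal.add_lt_add (hK k hk1) ?_
        exact hN₁ i (N₀ + φ k) hi hk2
    _ = ε := ENNReal.add_halves ε
end

section
/- Let ρ: Y × Y → [0,∞) be a function on a set Y with ρ(η,η) = 0 for all η, and suppose there exists ε' with 1 ≤ ε' < √2 such that ρ(η₁,η₂) ≤ ε' · max{ρ(η₁,η₃), ρ(η₃,η₂)} for all η₁,η₂,η₃ ∈ Y. Define d(η,μ) = inf over finite chains η = η₀, η₁, ..., η_n = μ of Σ_{i=0}^{n-1} ρ(η_i, η_{i+1}). Then (3 − 2ε')·ρ(η,μ) ≤ d(η,μ) ≤ ρ(η,μ) for all η,μ ∈ Y, and d is a pseudo-semimetric (d(η,η)=0 and d satisfies the triangle inequality).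 -/
/-- The chain infimum `d(η,μ)`: the infimum over finite chains
`η = η₀, η₁, …, η_n = μ` of `Σ ρ(η_i, η_{i+1})`. -/
noncomputable def chainInf {Y : Type*} (ρ : Y → Y → ℝ) (η μ : Y) : ℝ :=
  sInf {y : ℝ | ∃ (n : ℕ) (c : ℕ → Y), c 0 = η ∧ c n = μ ∧
    y = ∑ i ∈ Finset.range n, ρ (c i) (c (i + 1))}

/-- The key chain inequality, proved by strong induction on chain length. -/
lemma chain_lb {Y : Type*} (ρ : Y → Y → ℝ)
    (hnn : ∀ η μ : Y, 0 ≤ ρ η μ) (hrefl : ∀ η : Y, ρ η η = 0)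
    (ε' : ℝ) (hε1 : 1 ≤ ε') (hε2 : ε' < Real.sqrt 2)
    (hineq : ∀ η₁ η₂ η₃ : Y, ρ η₁ η₂ ≤ ε' * max (ρ η₁ η₃) (ρ η₃ η₂)) :
    ∀ n : ℕ, ∀ c : ℕ → Y,
      (3 - 2 * ε') * ρ (c 0) (c n) ≤ ∑ i ∈ Finset.range n, ρ (c i) (c (i + 1)) := by
  have hsq : ε' ^ 2 < 2 := by
    have h := Real.sq_sqrt (by norm_num : (0:ℝ) ≤ 2)
    nlinarith [Real.sqrt_nonneg 2]
  have hε0 : 0 ≤ ε' := by linarith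
  have ht : 0 < 3 - 2 * ε' := by nlinarith
  intro n
  induction n using Nat.strong_induction_on with
  | _ n IH =>
    match n with
    | 0 =>
      intro c
      simp [hrefl]
    | Nat.succ nn =>
      intro c
      set S := ∑ i ∈ Finset.range (nn + 1), ρ (c i) (c (i + 1)) with hSdef
      have hS0 : 0 ≤ S := Finset.sum_nonneg fun i _ => hnn _ _
      set P : ℕ → Prop := fun k => ∑ i ∈ Finset.range k, ρ (c i) (c (i + 1)) ≤ S / 2 with hPdef
      have hP0 : P 0 := by simp [hPdef]; linarith
      set m := Nat.findGreatest P nn with hmdef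
      have hm_le : m ≤ nn := Nat.findGreatest_le nn
      have hPm : P m := Nat.findGreatest_spec (Nat.zero_le nn) hP0
      have hsplit : S = (∑ i ∈ Finset.range (m + 1), ρ (c i) (c (i + 1)))
          + ∑ i ∈ Finset.range (nn - m), ρ (c (m + 1 + i)) (c (m + 1 + i + 1)) := by
        rw [hSdef]
        have : nn + 1 = (m + 1) + (nn - m) := by omega
        rw [this, Finset.sum_range_add]
      have htail : ∑ i ∈ Finset.range (nn - m), ρ (c (m + 1 + i)) (c (m + 1 + i + 1)) ≤ S / 2 := by
        rcases eq_or_lt_of_le hm_le with heq | hlt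
        · have : nn - m = 0 := by omega
          rw [this]; simp; linarith
        · have hnP : ¬ P (m + 1) := Nat.findGreatest_is_greatest (Nat.lt_succ_self m) (by omega)
          have : S / 2 < ∑ i ∈ Finset.range (m + 1), ρ (c i) (c (i + 1)) := by
            simpa [hPdef] using not_le.mp hnP
          linarith
      have hA : (3 - 2 * ε') * ρ (c 0) (c m) ≤ S / 2 :=
        le_trans (IH m (by omega) c) hPm
      have hC : (3 - 2 * ε') * ρ (c (m + 1)) (c (nn + 1)) ≤ S / 2 := by
        have hlt' : nn - m < nn + 1 := by omega
        have := IH (nn - m) hlt' (fun i => c (m + 1 + i))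
        have hend : m + 1 + (nn - m) = nn + 1 := by omega
        simp only [hend] at this
        exact le_trans (by simpa [add_assoc] using this) htail
      have hB : ρ (c m) (c (m + 1)) ≤ S := by
        rw [hSdef]
        exact Finset.single_le_sum (f := fun i => ρ (c i) (c (i + 1))) (fun i _ => hnn _ _)
          (Finset.mem_range.mpr (Nat.lt_succ_of_le hm_le))
      have h1 := hineq (c 0) (c (nn + 1)) (c m)
      have h2 := hineq (c m) (c (nn + 1)) (c (m + 1))
      set A := ρ (c 0) (c m)
      set B := ρ (c m) (c (m + 1))
      set C := ρ (c (m + 1)) (c (nn + 1))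
      set D := ρ (c m) (c (nn + 1))
      have hAnn : 0 ≤ A := hnn _ _
      have hBnn : 0 ≤ B := hnn _ _
      have hCnn : 0 ≤ C := hnn _ _
      rcases le_total A D with h | h
      · rw [max_eq_right h] at h1
        rcases le_total B C with h' | h'
        · rw [max_eq_right h'] at h2
          nlinarith [mul_le_mul_of_nonneg_left h2 hε0, mul_le_mul_of_nonneg_left h1 ht.le]
        · rw [max_eq_left h'] at h2
          nlinarith [mul_le_mul_of_nonneg_left h2 hε0, mul_le_mul_of_nonneg_left h1 ht.le,
            sq_nonneg (ε' - 1), mul_le_mul_of_nonneg_left hB (mul_nonneg hε0 hε0)]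
      · rw [max_eq_left h] at h1
        nlinarith [mul_le_mul_of_nonneg_left h1 ht.le]

lemma chain_mem {Y : Type*} (ρ : Y → Y → ℝ) (η μ : Y) :
    ρ η μ ∈ {y : ℝ | ∃ (n : ℕ) (c : ℕ → Y), c 0 = η ∧ c n = μ ∧
      y = ∑ i ∈ Finset.range n, ρ (c i) (c (i + 1))} :=
  ⟨1, fun i => if i = 0 then η else μ, by simp, by simp, by simp⟩

lemma chain_bdd {Y : Type*} (ρ : Y → Y → ℝ) (hnn : ∀ η μ : Y, 0 ≤ ρ η μ) (η μ : Y) :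
    BddBelow {y : ℝ | ∃ (n : ℕ) (c : ℕ → Y), c 0 = η ∧ c n = μ ∧
      y = ∑ i ∈ Finset.range n, ρ (c i) (c (i + 1))} := by
  refine ⟨0, fun y hy => ?_⟩
  obtain ⟨n, c, -, -, rfl⟩ := hy
  exact Finset.sum_nonneg fun i _ => hnn _ _

/-- Let `ρ : Y × Y → [0,∞)` satisfy `ρ(η,η) = 0` and
`ρ(η₁,η₂) ≤ ε'·max(ρ(η₁,η₃), ρ(η₃,η₂))` for some `1 ≤ ε' < √2`. Then the chain
infimum `d` satisfies `(3-2ε')·ρ ≤ d ≤ ρ` and is a pseudo-semimetric. -/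
theorem chainInf_pseudo_semimetric {Y : Type*} (ρ : Y → Y → ℝ)
    (hnn : ∀ η μ : Y, 0 ≤ ρ η μ) (hrefl : ∀ η : Y, ρ η η = 0)
    (ε' : ℝ) (hε1 : 1 ≤ ε') (hε2 : ε' < Real.sqrt 2)
    (hineq : ∀ η₁ η₂ η₃ : Y, ρ η₁ η₂ ≤ ε' * max (ρ η₁ η₃) (ρ η₃ η₂)) :
    (∀ η μ : Y, (3 - 2 * ε') * ρ η μ ≤ chainInf ρ η μ ∧ chainInf ρ η μ ≤ ρ η μ) ∧
    (∀ η : Y, chainInf ρ η η = 0) ∧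
    (∀ η μ ω : Y, chainInf ρ η μ ≤ chainInf ρ η ω + chainInf ρ ω μ) := by
  have key := chain_lb ρ hnn hrefl ε' hε1 hε2 hineq
  have hne : ∀ η μ : Y, ({y : ℝ | ∃ (n : ℕ) (c : ℕ → Y), c 0 = η ∧ c n = μ ∧
      y = ∑ i ∈ Finset.range n, ρ (c i) (c (i + 1))} : Set ℝ).Nonempty :=
    fun η μ => ⟨ρ η μ, chain_mem ρ η μ⟩
  refine ⟨fun η μ => ⟨?_, csInf_le (chain_bdd ρ hnn η μ) (chain_mem ρ η μ)⟩, ?_, ?_⟩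
  · -- lower bound
    apply le_csInf (hne η μ)
    rintro y ⟨n, c, rfl, rfl, rfl⟩
    exact key n c
  · -- reflexivity
    intro η
    refine le_antisymm (csInf_le (chain_bdd ρ hnn η η) ⟨0, fun _ => η, rfl, rfl, by simp⟩) ?_
    apply le_csInf (hne η η)
    rintro y ⟨n, c, -, -, rfl⟩
    exact Finset.sum_nonneg fun i _ => hnn _ _
  · -- triangle inequality
    intro η μ ω
    have hcat : ∀ y ∈ {y : ℝ | ∃ (n : ℕ) (c : ℕ → Y), c 0 = η ∧ c n = ω ∧
        y = ∑ i ∈ Finset.range n, ρ (c i) (c (i + 1))},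
        ∀ z ∈ {y : ℝ | ∃ (n : ℕ) (c : ℕ → Y), c 0 = ω ∧ c n = μ ∧
        y = ∑ i ∈ Finset.range n, ρ (c i) (c (i + 1))},
        chainInf ρ η μ ≤ y + z := by
      rintro y ⟨n₁, c₁, h10, h1n, rfl⟩ z ⟨n₂, c₂, h20, h2n, rfl⟩
      apply csInf_le (chain_bdd ρ hnn η μ)
      refine ⟨n₁ + n₂, fun i => if i < n₁ then c₁ i else c₂ (i - n₁), ?_, ?_, ?_⟩
      · by_cases h : 0 < n₁
        · simp [h, h10]
        · have hn1 : n₁ = 0 := by omega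
          subst hn1
          simpa [h20] using h1n.symm.trans h10
      · have : ¬ (n₁ + n₂ < n₁) := by omega
        simp [this, h2n]
      · rw [Finset.sum_range_add]
        congr 1
        · apply Finset.sum_congr rfl
          intro i hi
          have hi' : i < n₁ := Finset.mem_range.mp hi
          by_cases h : i + 1 < n₁
          · simp [hi', h]
          · have : i + 1 = n₁ := by omega
            simp [hi', h, this, h1n, h20]
        · apply Finset.sum_congr rfl
          intro i hi
          have h1 : ¬ (n₁ + i < n₁) := by omega
          have h2 : ¬ (n₁ + i + 1 < n₁) := by omega
          simp [h1, h2, Nat.add_sub_cancel_left]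
          congr 2
          omega
    have h2 : ∀ y ∈ {y : ℝ | ∃ (n : ℕ) (c : ℕ → Y), c 0 = η ∧ c n = ω ∧
        y = ∑ i ∈ Finset.range n, ρ (c i) (c (i + 1))},
        chainInf ρ η μ - chainInf ρ ω μ ≤ y := by
      intro y hy
      have h3 : chainInf ρ η μ - y ≤ chainInf ρ ω μ := by
        apply le_csInf (hne ω μ)
        intro z hz
        have := hcat y hy z hz
        linarith
      linarith
    have h4 := le_csInf (hne η ω) h2
    have h5 : chainInf ρ η ω = sInf _ := rfl
    rw [chainInf] at h4 ⊢
    linarith [le_csInf (hne η ω) h2]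
end

section
/- Let D be a digraph in which every vertex has finite out-degree, and let R_1, R_2 be rays in D. Then there are infinitely many pairwise disjoint directed R_1–R_2 paths if and only if for every vertex x and every R ∈ ℕ there is a directed R_1–R_2 path avoiding the out-ball B_R^+(x). -/
open ENNReal

variable {V : Type*}

/-- The directed-path semimetric of a digraph. -/
noncomputable def ddist (adj : V → V → Prop) (x y : V) : ℕ∞ :=
  sInf {n : ℕ∞ | ∃ l : List V, List.Chain' adj (x :: l) ∧
    (x :: l).getLast (List.cons_ne_nil x l) = y ∧ n = (l.length : ℕ∞)}

/-- A ray in a digraph: an injective sequence of vertices with an edge from each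
vertex to the next. -/
def IsRay (adj : V → V → Prop) (x : ℕ → V) : Prop :=
  Function.Injective x ∧ ∀ i : ℕ, adj (x i) (x (i + 1))

/-- A directed `R₁`–`R₂` path: a nonempty directed walk starting at a vertex of
`R₁` and ending at a vertex of `R₂`. -/
def IsLinkPath (adj : V → V → Prop) (R₁ R₂ : ℕ → V) (l : List V) : Prop :=
  List.Chain' adj l ∧ (∃ i : ℕ, l.head? = some (R₁ i)) ∧ ∃ j : ℕ, l.getLast? = some (R₂ j)

theorem ddist_le {V : Type*} (adj : V → V → Prop) (x v : V) (l : List V)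
    (h1 : List.Chain' adj (x :: l)) (h2 : (x :: l).getLast (List.cons_ne_nil x l) = v) :
    ddist adj x v ≤ (l.length : ℕ∞) :=
  sInf_le ⟨l, h1, h2, rfl⟩

theorem exists_chain_of_ddist_le {V : Type*} (adj : V → V → Prop) (x v : V) (n : ℕ)
    (h : ddist adj x v ≤ (n : ℕ∞)) :
    ∃ l : List V, List.Chain' adj (x :: l) ∧
      (x :: l).getLast (List.cons_ne_nil x l) = v ∧ l.length ≤ n := by
  have hne : {m : ℕ∞ | ∃ l : List V, List.Chain' adj (x :: l) ∧
      (x :: l).getLast (List.cons_ne_nil x l) = v ∧ m = (l.length : ℕ∞)}.Nonempty := by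
    by_contra hc
    rw [Set.not_nonempty_iff_eq_empty] at hc
    rw [ddist, hc, sInf_empty] at h
    simp at h
  obtain ⟨l, hl1, hl2, hl3⟩ := csInf_mem hne
  refine ⟨l, hl1, hl2, ?_⟩
  rw [ddist, hl3] at h
  exact_mod_cast h

theorem ddist_ne_top_iff {V : Type*} (adj : V → V → Prop) (x v : V) :
    ddist adj x v ≠ ⊤ ↔ ∃ l : List V, List.Chain' adj (x :: l) ∧
      (x :: l).getLast (List.cons_ne_nil x l) = v := by
  constructor
  · intro h
    lift ddist adj x v to ℕ using h with n hn
    obtain ⟨l, h1, h2, _⟩ := exists_chain_of_ddist_le adj x v n hn.ge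
    exact ⟨l, h1, h2⟩
  · rintro ⟨l, h1, h2⟩
    exact ne_top_of_le_ne_top (by simp) (ddist_le adj x v l h1 h2)

theorem ddist_trans_ne_top {V : Type*} (adj : V → V → Prop) {x y z : V}
    (h1 : ddist adj x y ≠ ⊤) (h2 : ddist adj y z ≠ ⊤) : ddist adj x z ≠ ⊤ := by
  rw [ddist_ne_top_iff] at h1 h2 ⊢
  obtain ⟨l1, hc1, hl1⟩ := h1
  obtain ⟨l2, hc2, hl2⟩ := h2
  refine ⟨l1 ++ l2, ?_, ?_⟩
  · rw [show x :: (l1 ++ l2) = (x :: l1) ++ l2 by simp]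
    show List.IsChain adj _
    rw [List.isChain_append]
    refine ⟨hc1, hc2.tail, ?_⟩
    intro a ha b hb
    rw [List.getLast?_eq_getLast (List.cons_ne_nil x l1), hl1, Option.mem_some_iff] at ha
    subst ha
    match l2, hb with
    | b :: t, rfl => exact (List.isChain_cons_cons.mp hc2).1
  · match l2, hl2 with
    | [], hl2 =>
      simp only [List.getLast_singleton] at hl2
      subst hl2
      simpa using hl1
    | b :: t, hl2 =>
      show ((x :: l1) ++ b :: t).getLast (by simp) = z
      rw [List.getLast_append_of_ne_nil _ (List.cons_ne_nil b t)]
      rw [List.getLast_cons (List.cons_ne_nil b t)] at hl2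
      exact hl2

theorem ball_finite {V : Type*} (adj : V → V → Prop) (hout : ∀ v : V, {w | adj v w}.Finite)
    (R : ℕ) : ∀ x : V, {v : V | ddist adj x v ≤ (R : ℕ∞)}.Finite := by
  induction R with
  | zero =>
    intro x
    apply Set.Finite.subset (Set.finite_singleton x)
    intro v hv
    obtain ⟨l, h1, h2, h3⟩ := exists_chain_of_ddist_le adj x v 0 hv
    rw [Nat.le_zero, List.length_eq_zero_iff] at h3
    subst h3
    simpa using h2.symm
  | succ R ih =>
    intro x
    apply Set.Finite.subset (Set.Finite.union (Set.finite_singleton x)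
      (Set.Finite.biUnion (hout x) (fun w _ => ih w)))
    intro v hv
    obtain ⟨l, h1, h2, h3⟩ := exists_chain_of_ddist_le adj x v (R + 1) hv
    match l with
    | [] => left; simpa using h2.symm
    | w :: t =>
      right
      refine Set.mem_biUnion ((List.isChain_cons_cons.mp h1).1 : adj x w) ?_
      refine le_trans (ddist_le adj w v t (List.isChain_cons_cons.mp h1).2 ?_) ?_
      · simpa using h2
      · exact_mod_cast Nat.succ_le_succ_iff.mp h3

theorem ddist_self_ne_top {V : Type*} (adj : V → V → Prop) (x : V) : ddist adj x x ≠ ⊤ :=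
  (ddist_ne_top_iff adj x x).mpr ⟨[], List.isChain_singleton x, rfl⟩

theorem ddist_ne_top_of_adj {V : Type*} {adj : V → V → Prop} {x y : V} (h : adj x y) :
    ddist adj x y ≠ ⊤ :=
  (ddist_ne_top_iff adj x y).mpr ⟨[y], List.isChain_pair.mpr h, rfl⟩

theorem ray_reach {V : Type*} {adj : V → V → Prop} {R₁ : ℕ → V} (h₁ : IsRay adj R₁) (i : ℕ) :
    ddist adj (R₁ 0) (R₁ i) ≠ ⊤ := by
  induction i with
  | zero => exact ddist_self_ne_top adj _
  | succ i ih => exact ddist_trans_ne_top adj ih (ddist_ne_top_of_adj (h₁.2 i))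

theorem chain_reach {V : Type*} {adj : V → V → Prop} :
    ∀ (l : List V) (h : V), List.Chain' adj l → l.head? = some h →
      ∀ v ∈ l, ddist adj h v ≠ ⊤ := by
  intro l
  induction l with
  | nil => intro h _ hh; simp at hh
  | cons a t ih =>
    intro h hc hh v hv
    simp only [List.head?_cons, Option.some_inj] at hh
    subst hh
    rcases List.mem_cons.mp hv with rfl | hv
    · exact ddist_self_ne_top adj v
    · match t, hv with
      | b :: t', hv =>
        exact ddist_trans_ne_top adj (ddist_ne_top_of_adj (List.isChain_cons_cons.mp hc).1)
          (ih b (List.isChain_cons_cons.mp hc).2 rfl v hv)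

theorem linkpath_reach {V : Type*} {adj : V → V → Prop} {R₁ R₂ : ℕ → V}
    (h₁ : IsRay adj R₁) {l : List V} (hl : IsLinkPath adj R₁ R₂ l) :
    ∀ v ∈ l, ddist adj (R₁ 0) v ≠ ⊤ := by
  obtain ⟨hc, ⟨i, hi⟩, _⟩ := hl
  intro v hv
  exact ddist_trans_ne_top adj (ray_reach h₁ i) (chain_reach l (R₁ i) hc hi v hv)

theorem avoid_list {V : Type*} {adj : V → V → Prop} {R₁ R₂ : ℕ → V} (h₁ : IsRay adj R₁)
    (hyp : ∀ (x : V) (R : ℕ), ∃ l : List V, IsLinkPath adj R₁ R₂ l ∧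
      ∀ v ∈ l, ¬ ddist adj x v ≤ (R : ℕ∞))
    (S : List V) (hS : ∀ v ∈ S, ddist adj (R₁ 0) v ≠ ⊤) :
    ∃ l : List V, IsLinkPath adj R₁ R₂ l ∧ ∀ v ∈ l, v ∉ S := by
  set R : ℕ := (S.map (fun v => (ddist adj (R₁ 0) v).toNat)).sum with hR
  have hball : ∀ v ∈ S, ddist adj (R₁ 0) v ≤ (R : ℕ∞) := by
    intro v hv
    have h1 : ((ddist adj (R₁ 0) v).toNat : ℕ∞) = ddist adj (R₁ 0) v :=
      ENat.coe_toNat (hS v hv)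
    have h2 : (ddist adj (R₁ 0) v).toNat ≤ R :=
      List.single_le_sum (fun x _ => Nat.zero_le x) _ (List.mem_map_of_mem hv)
    rw [← h1]
    exact_mod_cast h2
  obtain ⟨l, hl1, hl2⟩ := hyp (R₁ 0) R
  exact ⟨l, hl1, fun v hv hvS => hl2 v hv (hball v hvS)⟩

/-- Let `D` be a digraph in which every vertex has finite out-degree and let
`R₁, R₂` be rays.  Then there are infinitely many pairwise disjoint directed
`R₁`–`R₂` paths if and only if for every vertex `x` and every `R ∈ ℕ` there is a
directed `R₁`–`R₂` path avoiding the out-ball `B_R⁺(x)`. -/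
theorem disjoint_paths_iff_paths_outside_out_balls {V : Type*} (adj : V → V → Prop)
    (hout : ∀ v : V, {w | adj v w}.Finite)
    (R₁ R₂ : ℕ → V) (h₁ : IsRay adj R₁) (h₂ : IsRay adj R₂) :
    (∃ F : ℕ → List V, (∀ n, IsLinkPath adj R₁ R₂ (F n)) ∧
      ∀ n n', n ≠ n' → ∀ v : V, v ∈ F n → v ∉ F n') ↔
    (∀ (x : V) (R : ℕ), ∃ l : List V, IsLinkPath adj R₁ R₂ l ∧
      ∀ v ∈ l, ¬ ddist adj x v ≤ (R : ℕ∞)) := by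
  constructor
  · rintro ⟨F, hF, hdisj⟩ x R
    by_contra hc
    push_neg at hc
    have hex : ∀ n : ℕ, ∃ v, v ∈ F n ∧ ddist adj x v ≤ (R : ℕ∞) := by
      intro n
      obtain ⟨v, hv1, hv2⟩ := hc (F n) (hF n)
      exact ⟨v, hv1, hv2⟩
    choose f hf hfb using hex
    have hinj : Function.Injective f := by
      intro n n' h
      by_contra hne
      exact hdisj n n' hne (f n) (hf n) (h ▸ hf n')
    exact (Set.infinite_of_injective_forall_mem (s := {v | ddist adj x v ≤ (R : ℕ∞)}) hinj (fun n => hfb n))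
      (ball_finite adj hout R x)
  · intro hyp
    classical
    let pick : List V → List V := fun S =>
      if h : ∃ l : List V, IsLinkPath adj R₁ R₂ l ∧ ∀ v ∈ l, v ∉ S then h.choose else []
    have pick_spec : ∀ S : List V, (∀ v ∈ S, ddist adj (R₁ 0) v ≠ ⊤) →
        IsLinkPath adj R₁ R₂ (pick S) ∧ ∀ v ∈ pick S, v ∉ S := by
      intro S hS
      have h := avoid_list h₁ hyp S hS
      simpa [pick, dif_pos h] using h.choose_spec
    let A : ℕ → List V := fun n => Nat.rec [] (fun _ prev => pick prev ++ prev) n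
    have hA0 : A 0 = [] := rfl
    have hAs : ∀ n, A (n + 1) = pick (A n) ++ A n := fun n => rfl
    have hAfin : ∀ n, ∀ v ∈ A n, ddist adj (R₁ 0) v ≠ ⊤ := by
      intro n
      induction n with
      | zero => simp [hA0]
      | succ n ih =>
        intro v hv
        rw [hAs, List.mem_append] at hv
        rcases hv with hv | hv
        · exact linkpath_reach h₁ (pick_spec (A n) ih).1 v hv
        · exact ih v hv
    have hAmono : ∀ m n, m ≤ n → ∀ v ∈ A m, v ∈ A n := by
      intro m n hmn
      induction n with
      | zero => intro v hv; rwa [Nat.le_zero.mp hmn] at hv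
      | succ n ih =>
        rcases Nat.lt_or_ge m (n + 1) with h | h
        · intro v hv
          rw [hAs, List.mem_append]
          exact Or.inr (ih (Nat.lt_succ_iff.mp h) v hv)
        · intro v hv; rwa [Nat.le_antisymm hmn h] at hv
    have hFA : ∀ m n, m < n → ∀ v ∈ pick (A m), v ∈ A n := by
      intro m n hmn v hv
      refine hAmono (m + 1) n hmn v ?_
      rw [hAs, List.mem_append]
      exact Or.inl hv
    refine ⟨fun n => pick (A n), fun n => (pick_spec (A n) (hAfin n)).1, ?_⟩
    intro n n' hne v hv hv'
    rcases Nat.lt_or_ge n n' with h | h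
    · exact (pick_spec (A n') (hAfin n')).2 v hv' (hFA n n' h v hv)
    · exact (pick_spec (A n) (hAfin n)).2 v hv
        (hFA n' n (Nat.lt_of_le_of_ne h (fun e => hne e.symm)) v hv')
end
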